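/- Let F be a non-archimedean local field of characteristic zero with ring of integers O_F, maximal ideal P_F, and residue field of cardinality q. Let n, N be positive integers with n ≤ N ≤ 2n, let ψ₀ be a continuous additive character of F trivial on O_F and nontrivial on P_F^{−1}, and let χ be a character of F^× which is trivial on 1 + P_F^N. Then there exists a ∈ P_F^{−N} such that χ(det(I_m − v)) = ψ₀(a·tr(v)) for every m ≥ 1 and every v ∈ Mat_m(F) with ‖v‖ ≤ q^{−n}. -/

import Mathlib

open IsUltrametricDist in
lemma aux_norm_one_sub {F : Type*} [NormedField F] [IsUltrametricDist F]
    {t : F} (h : ‖t‖ < 1) : ‖1 - t‖ = 1 := by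
  have h1 : ‖(1:F) - t‖ ≤ 1 := by
    have := norm_add_le_max (1:F) (-t)
    simpa [sub_eq_add_neg] using this.trans (by simpa using max_le le_rfl h.le)
  rcases lt_or_eq_of_le h1 with h2 | h2
  · exfalso
    have h3 : ‖(1:F)‖ ≤ max ‖(1:F) - t‖ ‖t‖ := by
      simpa [sub_add_cancel] using norm_add_le_max ((1:F) - t) t
    rw [norm_one] at h3
    exact absurd h3 (not_le.mpr (max_lt h2 h))
  · exact h2


open IsUltrametricDist in
lemma aux_norm_one_sub_le {F : Type*} [NormedField F] [IsUltrametricDist F]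
    {t : F} (h : ‖t‖ ≤ 1) : ‖1 - t‖ ≤ 1 := by
  have := norm_add_le_max (1:F) (-t)
  simpa [sub_eq_add_neg] using this.trans (by simpa using max_le le_rfl h)

open IsUltrametricDist in
lemma aux_prod_est {F : Type*} [NormedField F] [IsUltrametricDist F]
    {ι : Type*} (s : Finset ι) (f : ι → F) {ε : ℝ} (hε0 : 0 ≤ ε) (hε1 : ε ≤ 1)
    (hf : ∀ i ∈ s, ‖f i‖ ≤ ε) :
    ‖∏ i ∈ s, (1 - f i) - (1 - ∑ i ∈ s, f i)‖ ≤ ε * ε := by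
  classical
  induction s using Finset.induction_on with
  | empty => simpa using mul_nonneg hε0 hε0
  | @insert a s' ha IH =>
    have hfa : ‖f a‖ ≤ ε := hf a (Finset.mem_insert_self a s')
    have hf' : ∀ i ∈ s', ‖f i‖ ≤ ε := fun i hi => hf i (Finset.mem_insert_of_mem hi)
    have IH' := IH hf'
    set P := ∏ i ∈ s', (1 - f i) with hP
    set S := ∑ i ∈ s', f i with hS
    have hSn : ‖S‖ ≤ ε := norm_sum_le_of_forall_le_of_nonneg hε0 hf'
    rw [Finset.prod_insert ha, Finset.sum_insert ha]
    have key : (1 - f a) * P - (1 - (f a + S))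
        = (1 - f a) * (P - (1 - S)) + f a * S := by ring
    rw [key]
    refine (norm_add_le_max _ _).trans (max_le ?_ ?_)
    · rw [norm_mul]
      calc ‖1 - f a‖ * ‖P - (1 - S)‖ ≤ 1 * (ε * ε) := by
            exact mul_le_mul (aux_norm_one_sub_le (hfa.trans hε1)) IH'
              (norm_nonneg _) zero_le_one
        _ = ε * ε := one_mul _
    · rw [norm_mul]
      exact mul_le_mul hfa hSn (norm_nonneg _) hε0

open IsUltrametricDist in
lemma aux_det_est {F : Type*} [NormedField F] [IsUltrametricDist F]
    {m : ℕ} (v : Matrix (Fin m) (Fin m) F) {ε : ℝ} (hε0 : 0 ≤ ε) (hε1 : ε ≤ 1)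
    (hv : ∀ i j, ‖v i j‖ ≤ ε)
    (hprod : ‖∏ i, (1 - v i i) - (1 - ∑ i, v i i)‖ ≤ ε * ε) :
    ‖(1 - v).det - (1 - v.trace)‖ ≤ ε * ε := by
  classical
  have hsign : ∀ (u : ℤˣ) (x : F), ‖u • x‖ = ‖x‖ := by
    intro u x
    rcases Int.units_eq_one_or u with h | h <;> simp [h, Units.smul_def]
  have hentry : ∀ i j, (1 - v) i j = (if i = j then (1:F) else 0) - v i j := by
    intro i j
    simp [Matrix.sub_apply, Matrix.one_apply]
  have hg1 : ∀ (σ : Equiv.Perm (Fin m)) (i : Fin m), ‖(1 - v) (σ i) i‖ ≤ 1 := by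
    intro σ i
    rw [hentry]
    by_cases h : σ i = i
    · rw [if_pos h]
      exact aux_norm_one_sub_le ((hv _ _).trans hε1)
    · rw [if_neg h, zero_sub, norm_neg]
      exact (hv _ _).trans hε1
  have hterm : ∀ σ : Equiv.Perm (Fin m), σ ≠ 1 →
      ‖Equiv.Perm.sign σ • ∏ i, (1 - v) (σ i) i‖ ≤ ε * ε := by
    intro σ hσ
    rw [hsign, norm_prod]
    obtain ⟨x, hx⟩ : ∃ x, σ x ≠ x := by
      by_contra h
      push_neg at h
      exact hσ (Equiv.ext h)
    have hσx : σ (σ x) ≠ σ x := fun h => hx (σ.injective h)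
    have hne : x ≠ σ x := Ne.symm hx
    have hgε : ∀ i, σ i ≠ i → ‖(1 - v) (σ i) i‖ ≤ ε := by
      intro i hi
      rw [hentry, if_neg hi, zero_sub, norm_neg]
      exact hv _ _
    have hsplit := Finset.prod_sdiff (Finset.subset_univ ({x, σ x} : Finset (Fin m)))
      (f := fun i => ‖(1 - v) (σ i) i‖)
    rw [← hsplit]
    have h2 : ∏ i ∈ ({x, σ x} : Finset (Fin m)), ‖(1 - v) (σ i) i‖ ≤ ε * ε := by
      rw [Finset.prod_pair hne]
      exact mul_le_mul (hgε x hx) (hgε (σ x) hσx) (norm_nonneg _) hε0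
    have h1 : ∏ i ∈ Finset.univ \ ({x, σ x} : Finset (Fin m)), ‖(1 - v) (σ i) i‖ ≤ 1 :=
      Finset.prod_le_one (fun i _ => norm_nonneg _) (fun i _ => hg1 σ i)
    calc (∏ i ∈ Finset.univ \ ({x, σ x} : Finset (Fin m)), ‖(1 - v) (σ i) i‖) *
          ∏ i ∈ ({x, σ x} : Finset (Fin m)), ‖(1 - v) (σ i) i‖
        ≤ 1 * (ε * ε) := by
          refine mul_le_mul h1 h2 (Finset.prod_nonneg fun i _ => norm_nonneg _) zero_le_one
      _ = ε * ε := one_mul _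
  rw [Matrix.det_apply, ← Finset.add_sum_erase _ _ (Finset.mem_univ (1 : Equiv.Perm (Fin m)))]
  have hid : (Equiv.Perm.sign (1 : Equiv.Perm (Fin m))) • ∏ i, (1 - v) ((1 : Equiv.Perm (Fin m)) i) i
      = ∏ i, (1 - v i i) := by
    simp only [Equiv.Perm.sign_one, one_smul, Equiv.Perm.one_apply]
    exact Finset.prod_congr rfl fun i _ => by rw [hentry, if_pos rfl]
  rw [hid]
  have htr : v.trace = ∑ i, v i i := rfl
  rw [htr]
  have hre : (∏ i, (1 - v i i)) + (∑ σ ∈ Finset.univ.erase 1, Equiv.Perm.sign σ • ∏ i, (1 - v) (σ i) i)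
      - (1 - ∑ i, v i i)
      = ((∏ i, (1 - v i i)) - (1 - ∑ i, v i i)) + ∑ σ ∈ Finset.univ.erase 1, Equiv.Perm.sign σ • ∏ i, (1 - v) (σ i) i := by
    ring
  rw [hre]
  refine (norm_add_le_max _ _).trans (max_le hprod ?_)
  exact norm_sum_le_of_forall_le_of_nonneg (mul_nonneg hε0 hε0)
    (fun σ hσ => hterm σ (Finset.ne_of_mem_erase hσ))


lemma aux_char_surj {G : Type*} [AddCommGroup G] [Finite G]
    {ι : Type*} (Φ : ι → AddChar G Circle) (hΦ : Function.Injective Φ)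
    (hcard : Nat.card G ≤ Nat.card ι) (hι : Finite ι) :
    Function.Surjective Φ := by
  obtain ⟨e⟩ := CommGroup.monoidHom_mulEquiv_of_hasEnoughRootsOfUnity (Multiplicative G) ℂ
  have htU : Function.Injective (Circle.toUnits) := by
    intro a b h
    exact Circle.coe_injective (congrArg Units.val h)
  have hcomp : Function.Injective
      (fun φ : Multiplicative G →* Circle => Circle.toUnits.comp φ) := by
    intro φ φ' h
    ext g
    exact congrArg _ (htU (congrArg (fun ψ => ψ g) h))
  have hFinU : Finite (Multiplicative G →* ℂˣ) := Finite.of_equiv _ e.toEquiv.symm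
  have hFinC : Finite (Multiplicative G →* Circle) := Finite.of_injective _ hcomp
  have hFinA : Finite (AddChar G Circle) :=
    Finite.of_equiv _ AddChar.toMonoidHomEquiv.symm
  have h1 : Nat.card (AddChar G Circle) = Nat.card (Multiplicative G →* Circle) :=
    Nat.card_congr AddChar.toMonoidHomEquiv
  have h2 : Nat.card (Multiplicative G →* Circle) ≤ Nat.card (Multiplicative G →* ℂˣ) :=
    Nat.card_le_card_of_injective _ hcomp
  have h3 : Nat.card (Multiplicative G →* ℂˣ) = Nat.card G :=
    Nat.card_congr e.toEquiv
  have hle : Nat.card (AddChar G Circle) ≤ Nat.card ι := by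
    omega
  exact (hΦ.bijective_of_nat_card_le hle).2


/-- Let `F` be a non-archimedean local field of characteristic zero
(formalized via its ultrametric absolute value with value group `q^ℤ`, `q > 1`; membership
in `P_F^k`, `k ∈ ℤ`, means norm `≤ q^(-k)`; `‖v‖ = max |v i j|` for matrices).  Let
`n ≤ N ≤ 2n` be positive integers, `ψ₀` a continuous additive character of `F` trivial on
`O_F` and nontrivial on `P_F^(-1)`, and `χ` a character of `F^×` trivial on `1 + P_F^N`.
Then there is `a ∈ P_F^(-N)` with `χ(det(I_m − v)) = ψ₀(a·tr(v))` for every `m ≥ 1` and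
every `v ∈ Mat_m(F)` with `‖v‖ ≤ q^(-n)`. -/
theorem stmt_15 (F : Type*) [NormedField F] [IsUltrametricDist F]
    [CompleteSpace F] [CharZero F] [ProperSpace F]
    (q : ℝ) (hq : 1 < q)
    (hdisc : ∀ x : F, x ≠ 0 → ∃ k : ℤ, ‖x‖ = q ^ k)
    (hunif : ∃ π : F, ‖π‖ = q⁻¹)
    (ψ₀ : AddChar F Circle) (hψcont : Continuous ψ₀)
    (hψtriv : ∀ x : F, ‖x‖ ≤ 1 → ψ₀ x = 1)
    (hψnontriv : ∃ x : F, ‖x‖ ≤ q ∧ ψ₀ x ≠ 1)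
    {n N : ℕ} (hn : 0 < n) (hnN : n ≤ N) (hN2 : N ≤ 2 * n)
    (χ : Fˣ →* Circle)
    (hχ : ∀ u : Fˣ, ‖(u : F) - 1‖ ≤ q ^ (-(N : ℤ)) → χ u = 1) :
    ∃ a : F, ‖a‖ ≤ q ^ (N : ℤ) ∧
      ∀ m : ℕ, 1 ≤ m → ∀ v : Matrix (Fin m) (Fin m) F,
        (∀ i j, ‖v i j‖ ≤ q ^ (-(n : ℤ))) →
        ∀ u : Fˣ, (u : F) = (1 - v).det → χ u = ψ₀ (a * v.trace) := by
  classical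
  obtain ⟨π, hπ⟩ := hunif
  obtain ⟨x₀, hx₀q, hx₀⟩ := hψnontriv
  have hq0 : (0:ℝ) < q := lt_trans one_pos hq
  set ε : ℝ := q ^ (-(n:ℤ)) with hεdef
  set δ : ℝ := q ^ (-(N:ℤ)) with hδdef
  have hε0 : 0 < ε := zpow_pos hq0 _
  have hδ0 : 0 < δ := zpow_pos hq0 _
  have hε1 : ε < 1 := by
    have h := (zpow_lt_zpow_iff_right₀ hq (m := -(n:ℤ)) (n := 0)).mpr (by omega)
    rwa [zpow_zero] at h
  have hδε : δ ≤ ε := (zpow_le_zpow_iff_right₀ hq).mpr (by omega)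
  have hεεδ : ε * ε ≤ δ := by
    rw [hεdef, hδdef, ← zpow_add₀ (ne_of_gt hq0)]
    exact (zpow_le_zpow_iff_right₀ hq).mpr (by omega)
  have hπ0 : π ≠ 0 := by
    intro h
    rw [h, norm_zero] at hπ
    exact absurd hπ.symm (ne_of_gt (inv_pos.mpr hq0))
  set c : F := (π ^ (N + n))⁻¹ with hcdef
  have hc0 : c ≠ 0 := inv_ne_zero (pow_ne_zero _ hπ0)
  have hcnorm : ‖c‖ = q ^ ((N : ℤ) + (n : ℤ)) := by
    rw [hcdef, norm_inv, norm_pow, hπ, ← zpow_natCast (q⁻¹), ← zpow_neg_one q, ← zpow_mul,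
      ← zpow_neg]
    congr 1
    push_cast
    ring
  -- subgroups
  let B : AddSubgroup F :=
    { carrier := {x : F | ‖x‖ ≤ ε}
      add_mem' := fun {a b} ha hb =>
        (IsUltrametricDist.norm_add_le_max a b).trans (max_le ha hb)
      zero_mem' := by simpa using hε0.le
      neg_mem' := fun {a} ha => by simpa using ha }
  have hmemB : ∀ x : F, x ∈ B ↔ ‖x‖ ≤ ε := fun x => Iff.rfl
  let Cf : AddSubgroup F :=
    { carrier := {x : F | ‖x‖ ≤ δ}
      add_mem' := fun {a b} ha hb =>
        (IsUltrametricDist.norm_add_le_max a b).trans (max_le ha hb)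
      zero_mem' := by simpa using hδ0.le
      neg_mem' := fun {a} ha => by simpa using ha }
  let C : AddSubgroup B := Cf.comap B.subtype
  have hmemC : ∀ t : B, t ∈ C ↔ ‖(t : F)‖ ≤ δ := fun t => Iff.rfl
  haveI : CompactSpace B := by
    have hBset : (B : Set F) = Metric.closedBall 0 ε := by
      ext x
      simp only [Metric.mem_closedBall, dist_zero_right]
      rfl
    have : IsCompact (B : Set F) := hBset ▸ isCompact_closedBall 0 ε
    exact isCompact_iff_compactSpace.mp this
  have hCopen : IsOpen (C : Set B) := by
    have h1 : (C : Set B) = (Subtype.val : B → F) ⁻¹' (Metric.closedBall 0 δ) := by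
      ext t
      simp [Metric.mem_closedBall, dist_zero_right]
      rfl
    rw [h1]
    exact (IsUltrametricDist.isOpen_closedBall (0 : F) hδ0.ne').preimage
      continuous_subtype_val
  haveI hGfin : Finite (B ⧸ C) := AddSubgroup.quotient_finite_of_isOpen C hCopen
  -- units
  have hne : ∀ t : F, ‖t‖ ≤ ε → (1 : F) - t ≠ 0 := by
    intro t ht h0
    have h1 : ‖(1:F) - t‖ = 1 := aux_norm_one_sub (lt_of_le_of_lt ht hε1)
    rw [h0, norm_zero] at h1
    norm_num at h1
  let U : B → Fˣ := fun t => Units.mk0 ((1 : F) - (t : F)) (hne (t : F) t.2)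
  have hUval : ∀ t : B, (U t : F) = 1 - (t : F) := fun t => rfl
  have hUnorm : ∀ t : B, ‖(U t : F)‖ = 1 := fun t =>
    aux_norm_one_sub (lt_of_le_of_lt t.2 hε1)
  have hχ' : ∀ u w : Fˣ, ‖(w : F)‖ = 1 → ‖(u : F) - (w : F)‖ ≤ δ → χ u = χ w := by
    intro u w hw hd
    have hw0 : (w : F) ≠ 0 := Units.ne_zero w
    have h1 : χ (w⁻¹ * u) = 1 := by
      apply hχ
      have h2 : ((w⁻¹ * u : Fˣ) : F) - 1 = (w : F)⁻¹ * ((u : F) - (w : F)) := by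
        field_simp
        rw [Units.val_mul, Units.val_inv_eq_inv_val]
        linear_combination (u : F) * inv_mul_cancel₀ hw0
      rw [h2, norm_mul, norm_inv, hw, inv_one, one_mul]
      exact hd
    calc χ u = χ (w * (w⁻¹ * u)) := by rw [mul_inv_cancel_left]
      _ = χ w * χ (w⁻¹ * u) := map_mul _ _ _
      _ = χ w := by rw [h1, mul_one]
  -- η as additive character of B
  have hUmul : ∀ s t : B, χ (U (s + t)) = χ (U s) * χ (U t) := by
    intro s t
    have h1 : χ (U (s + t)) = χ (U s * U t) := by
      apply hχ'
      · rw [Units.val_mul, norm_mul, hUnorm, hUnorm, mul_one]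
      · have h2 : ((U (s + t) : F)) - ((U s * U t : Fˣ) : F) = -((s : F) * (t : F)) := by
          rw [Units.val_mul, hUval, hUval, hUval]
          push_cast
          ring
        rw [h2, norm_neg, norm_mul]
        exact le_trans (mul_le_mul s.2 t.2 (norm_nonneg _) hε0.le) hεεδ
    rw [h1, map_mul]
  let η : AddChar B Circle :=
    { toFun := fun t => χ (U t)
      map_zero_eq_one' := by
        show χ (U 0) = 1
        have h0 : U 0 = 1 := by
          apply Units.ext
          rw [hUval]
          push_cast
          ring
        rw [h0, map_one]
      map_add_eq_mul' := hUmul }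
  have hηtriv : ∀ t : B, t ∈ C → η t = 1 := by
    intro t ht
    apply hχ
    rw [hUval]
    have : (1 : F) - (t : F) - 1 = -(t : F) := by ring
    rw [this, norm_neg]
    exact ht
  -- lift η to the quotient
  let ηbar : AddChar (B ⧸ C) Circle :=
    AddChar.toAddMonoidHomEquiv.symm (QuotientAddGroup.lift C
      (AddChar.toAddMonoidHomEquiv η) (fun t ht => by
        have h := hηtriv t ht
        exact congrArg Additive.ofMul h))
  have hηbar : ∀ t : B, ηbar ((t : B ⧸ C)) = η t := fun t => rfl
  -- the pairing characters
  let Φ₀ : B → AddChar B Circle := fun s =>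
    ψ₀.compAddMonoidHom ((AddMonoidHom.mulLeft (c * (s : F))).comp B.subtype)
  have hΦ₀ : ∀ s t : B, Φ₀ s t = ψ₀ (c * (s : F) * (t : F)) := fun s t => rfl
  have hnorm_cst : ∀ s t : F, ‖s‖ ≤ ε → ‖t‖ ≤ δ → ‖c * s * t‖ ≤ 1 := by
    intro s t hs ht
    rw [norm_mul, norm_mul, hcnorm]
    have h1 : q ^ ((N : ℤ) + (n : ℤ)) * ‖s‖ * ‖t‖ ≤ q ^ ((N : ℤ) + (n : ℤ)) * ε * δ := by
      apply mul_le_mul _ ht (norm_nonneg _) (by positivity)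
      exact mul_le_mul le_rfl hs (norm_nonneg _) (zpow_pos hq0 _).le
    refine h1.trans (le_of_eq ?_)
    rw [hεdef, hδdef, ← zpow_add₀ hq0.ne', ← zpow_add₀ hq0.ne']
    norm_num
  have hΦ₀triv : ∀ s : B, ∀ t : B, t ∈ C → Φ₀ s t = 1 := fun s t ht =>
    hψtriv _ (hnorm_cst _ _ s.2 ht)
  let Φ₁ : B → AddChar (B ⧸ C) Circle := fun s =>
    AddChar.toAddMonoidHomEquiv.symm (QuotientAddGroup.lift C
      (AddChar.toAddMonoidHomEquiv (Φ₀ s)) (fun t ht =>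
        congrArg Additive.ofMul (hΦ₀triv s t ht)))
  have hΦ₁ : ∀ s t : B, Φ₁ s ((t : B ⧸ C)) = ψ₀ (c * (s : F) * (t : F)) :=
    fun s t => rfl
  have hΦ₁congr : ∀ s s' : B, -s + s' ∈ C → Φ₁ s = Φ₁ s' := by
    intro s s' hss
    ext g
    refine QuotientAddGroup.induction_on g (fun t => ?_)
    rw [hΦ₁ s t, hΦ₁ s' t]
    have hdnorm : ‖(s' : F) - (s : F)‖ ≤ δ := by
      have h := (hmemC _).mp hss
      rw [show ((-s + s' : B) : F) = (s' : F) - (s : F) by push_cast; ring] at h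
      exact h
    have hd1 : ψ₀ (c * ((s' : F) - (s : F)) * (t : F)) = 1 :=
      hψtriv _ (by
        have h2 := hnorm_cst ((t : F)) ((s' : F) - (s : F)) t.2 hdnorm
        calc ‖c * ((s' : F) - (s : F)) * (t : F)‖
            = ‖c * (t : F) * ((s' : F) - (s : F))‖ := by ring_nf
          _ ≤ 1 := h2)
    have hsplit : c * (s' : F) * (t : F)
        = c * (s : F) * (t : F) + c * ((s' : F) - (s : F)) * (t : F) := by ring
    rw [hsplit, AddChar.map_add_eq_mul, hd1, mul_one]
  let Φ : (B ⧸ C) → AddChar (B ⧸ C) Circle := fun g =>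
    Quotient.liftOn' g Φ₁ (fun s s' h =>
      hΦ₁congr s s' ((QuotientAddGroup.leftRel_apply).mp h))
  have hΦmk : ∀ s : B, Φ ((s : B ⧸ C)) = Φ₁ s := fun s => rfl
  have hΦinj : Function.Injective Φ := by
    intro g g' hgg
    refine QuotientAddGroup.induction_on g (fun s hgg => ?_) hgg
    refine QuotientAddGroup.induction_on g' (fun s' hgg => ?_) hgg
    rw [QuotientAddGroup.eq]
    rw [hmemC]
    rw [show ((-s + s' : B) : F) = (s' : F) - (s : F) by push_cast; ring]
    by_contra hd
    push_neg at hd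
    set d : F := (s' : F) - (s : F) with hddef
    have hd0 : d ≠ 0 := by
      intro h
      rw [h, norm_zero] at hd
      exact absurd hd (not_lt.mpr hδ0.le)
    obtain ⟨j, hj⟩ := hdisc d hd0
    have hdB : ‖d‖ ≤ ε := by
      rw [hddef]
      exact (sub_mem s'.2 s.2 : _)
    have hjn : j ≤ -(n : ℤ) := by
      rw [hj, hεdef] at hdB
      exact (zpow_le_zpow_iff_right₀ hq).mp hdB
    have hjN : -(N : ℤ) < j := by
      rw [hj, hδdef] at hd
      exact (zpow_lt_zpow_iff_right₀ hq).mp hd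
    have hcd0 : c * d ≠ 0 := mul_ne_zero hc0 hd0
    set t₀ : F := x₀ / (c * d) with ht₀def
    have ht₀ : ‖t₀‖ ≤ ε := by
      rw [ht₀def, norm_div, norm_mul, hcnorm, hj, ← zpow_add₀ hq0.ne']
      rw [div_le_iff₀ (zpow_pos hq0 _)]
      calc ‖x₀‖ ≤ q := hx₀q
        _ ≤ ε * q ^ ((N : ℤ) + (n : ℤ) + j) := by
            rw [hεdef, ← zpow_add₀ hq0.ne']
            have h9 : q ^ (1 : ℤ) ≤ q ^ (-(n : ℤ) + ((N : ℤ) + (n : ℤ) + j)) :=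
              zpow_le_zpow_right₀ hq.le (by omega)
            simpa using h9
    have heval := congrArg (fun ch : AddChar (B ⧸ C) Circle =>
      ch (((⟨t₀, ht₀⟩ : B) : B ⧸ C))) hgg
    simp only [hΦmk] at heval
    rw [hΦ₁ s ⟨t₀, ht₀⟩, hΦ₁ s' ⟨t₀, ht₀⟩] at heval
    have hsplit : c * (s' : F) * t₀ = c * (s : F) * t₀ + c * d * t₀ := by
      rw [hddef]; ring
    rw [hsplit, AddChar.map_add_eq_mul] at heval
    have h1 : ψ₀ (c * d * t₀) = 1 := left_eq_mul.mp heval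
    have h2 : c * d * t₀ = x₀ := by
      rw [ht₀def]
      field_simp
    rw [h2] at h1
    exact hx₀ h1
  -- surjectivity of the pairing and conclusion
  obtain ⟨g₀, hg₀⟩ := aux_char_surj Φ hΦinj le_rfl inferInstance ηbar
  obtain ⟨s, rfl⟩ := QuotientAddGroup.mk_surjective g₀
  refine ⟨c * (s : F), ?_, ?_⟩
  · rw [norm_mul, hcnorm]
    have h1 : q ^ ((N : ℤ) + (n : ℤ)) * ‖(s : F)‖ ≤ q ^ ((N : ℤ) + (n : ℤ)) * ε :=
      mul_le_mul le_rfl s.2 (norm_nonneg _) (zpow_pos hq0 _).le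
    refine h1.trans (le_of_eq ?_)
    rw [hεdef, ← zpow_add₀ hq0.ne']
    congr 1
    ring
  · intro m hm v hv u hu
    have htr : ‖v.trace‖ ≤ ε := by
      have h0 : v.trace = ∑ i, v i i := rfl
      rw [h0]
      exact IsUltrametricDist.norm_sum_le_of_forall_le_of_nonneg hε0.le
        (fun i _ => hv i i)
    have hdet : ‖(1 - v).det - (1 - v.trace)‖ ≤ ε * ε :=
      aux_det_est v hε0.le hε1.le hv
        (aux_prod_est Finset.univ (fun i => v i i) hε0.le hε1.le (fun i _ => hv i i))
    set tB : B := ⟨v.trace, htr⟩ with htBdef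
    have h1 : χ u = χ (U tB) := by
      apply hχ' u (U tB) (hUnorm tB)
      rw [hUval, hu]
      exact hdet.trans hεεδ
    have h2 : χ (U tB) = η tB := rfl
    have h3 : η tB = ηbar ((tB : B ⧸ C)) := (hηbar tB).symm
    have h4 : ηbar ((tB : B ⧸ C)) = Φ ((s : B ⧸ C)) ((tB : B ⧸ C)) := by rw [hg₀]
    have h5 : Φ ((s : B ⧸ C)) ((tB : B ⧸ C)) = ψ₀ (c * (s : F) * v.trace) := by
      rw [hΦmk, hΦ₁ s tB]
    rw [h1, h2, h3, h4, h5, mul_assoc]
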